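/- Fix d = (d_0,…,d_n) ∈ (ℕ_{>0})^{n+1} and let Δ̂ = {z ∈ (ℝ_{≥0})^{n+1} : |z| = |d|}. For I ⊆ {0,…,n} with I and its complement I^c both nonempty, let Ĉ_I = {z ∈ Δ̂ : z_i ≥ d_i for i ∈ I, z_i ≤ d_i for i ∈ I^c}. Then Ĉ_I has dimension n, and the vertices of the polytope Ĉ_I are exactly the points v̂_{J,l} = (Σ_{j∈J} d_j)·ê_l + Σ_{j∈J^c} d_j·ê_j for subsets J ⊆ I^c and indices l ∈ I, where ê_0,…,ê_n is the standard basis of ℝ^{n+1} and J^c = {0,…,n} \ J. -/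

import Mathlib

noncomputable section

/-- The dimension of a subset of a real vector space: the dimension of its affine span. -/
def dimAff {V : Type*} [AddCommGroup V] [Module ℝ V] (S : Set V) : ℕ :=
  Module.finrank ℝ (affineSpan ℝ S).direction

/-- The cell `Ĉ_I ⊆ Δ̂ = {z ∈ ℝ^{n+1}_{≥0} : |z| = |d|}`. -/
def Chat {n : ℕ} (d : Fin (n + 1) → ℕ) (I : Finset (Fin (n + 1))) :
    Set (Fin (n + 1) → ℝ) :=
  {z | (∀ i, 0 ≤ z i) ∧ (∑ i, z i) = (∑ i, (d i : ℝ)) ∧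
    (∀ i ∈ I, (d i : ℝ) ≤ z i) ∧ (∀ i ∈ Iᶜ, z i ≤ (d i : ℝ))}

/-- The point `v̂_{J,l} = (Σ_{j∈J} d_j)·ê_l + Σ_{j∈J^c} d_j·ê_j`. -/
def vhat {n : ℕ} (d : Fin (n + 1) → ℕ) (J : Finset (Fin (n + 1))) (l : Fin (n + 1)) :
    Fin (n + 1) → ℝ :=
  fun k => (if k ∈ J then 0 else (d k : ℝ)) + (if k = l then ∑ j ∈ J, (d j : ℝ) else 0)

namespace Stmt9Aux

variable {n : ℕ}

lemma pin_le {a b p q c : ℝ} (ha : 0 < a) (hb : 0 < b) (hab : a + b = 1)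
    (hp : p ≤ c) (hq : q ≤ c) (h : a*p + b*q = c) : p = c ∧ q = c := by
  have habc : a*c + b*c = c := by rw [← add_mul, hab, one_mul]
  constructor
  · by_contra hne
    have hlt : a*p < a*c := mul_lt_mul_of_pos_left (lt_of_le_of_ne hp hne) ha
    have hle : b*q ≤ b*c := mul_le_mul_of_nonneg_left hq hb.le
    linarith
  · by_contra hne
    have hlt : b*q < b*c := mul_lt_mul_of_pos_left (lt_of_le_of_ne hq hne) hb
    have hle : a*p ≤ a*c := mul_le_mul_of_nonneg_left hp ha.le
    linarith

lemma pin_ge {a b p q c : ℝ} (ha : 0 < a) (hb : 0 < b) (hab : a + b = 1)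
    (hp : c ≤ p) (hq : c ≤ q) (h : a*p + b*q = c) : p = c ∧ q = c := by
  have h' : a*(-p) + b*(-q) = -c := by linarith
  have := pin_le ha hb hab (neg_le_neg hp) (neg_le_neg hq) h'
  exact ⟨by linarith [this.1], by linarith [this.2]⟩

lemma eq_at_of_sum_eq {z w : Fin (n+1) → ℝ} {l : Fin (n+1)}
    (h : ∀ k, k ≠ l → z k = w k) (hs : ∑ k, z k = ∑ k, w k) : z l = w l := by
  have h1 := Finset.add_sum_erase Finset.univ z (Finset.mem_univ l)
  have h2 := Finset.add_sum_erase Finset.univ w (Finset.mem_univ l)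
  have h3 : ∑ k ∈ Finset.univ.erase l, z k = ∑ k ∈ Finset.univ.erase l, w k :=
    Finset.sum_congr rfl fun k hk => h k (Finset.ne_of_mem_erase hk)
  linarith

lemma vhat_sum (d : Fin (n+1) → ℕ) (J : Finset (Fin (n+1))) (l : Fin (n+1)) :
    ∑ k, vhat d J l k = ∑ k, (d k : ℝ) := by
  unfold vhat
  rw [Finset.sum_add_distrib]
  have h1 : ∑ k, (if k = l then ∑ j ∈ J, (d j : ℝ) else 0) = ∑ j ∈ J, (d j : ℝ) := by
    simp
  have h2 : ∀ k : Fin (n+1), (if k ∈ J then (0:ℝ) else d k) = (d k : ℝ) - (if k ∈ J then (d k:ℝ) else 0) := by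
    intro k; split <;> ring
  rw [h1, Finset.sum_congr rfl (fun k _ => h2 k), Finset.sum_sub_distrib]
  rw [Finset.sum_ite_mem, Finset.univ_inter]
  ring

lemma vhat_mem (d : Fin (n+1) → ℕ) (I : Finset (Fin (n+1)))
    {J : Finset (Fin (n+1))} (hJ : J ⊆ Iᶜ) {l : Fin (n+1)} (hl : l ∈ I) :
    vhat d J l ∈ Chat d I := by
  have hlJ : l ∉ J := fun h => (Finset.mem_compl.1 (hJ h)) hl
  have hS : (0:ℝ) ≤ ∑ j ∈ J, (d j : ℝ) := Finset.sum_nonneg fun j _ => Nat.cast_nonneg _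
  refine ⟨?_, vhat_sum d J l, ?_, ?_⟩
  · intro k
    unfold vhat
    have : (0:ℝ) ≤ (if k ∈ J then (0:ℝ) else d k) := by positivity
    have : (0:ℝ) ≤ (if k = l then ∑ j ∈ J, (d j:ℝ) else 0) := by positivity
    positivity
  · intro i hiI
    have hiJ : i ∉ J := fun h => (Finset.mem_compl.1 (hJ h)) hiI
    unfold vhat
    rw [if_neg hiJ]
    split <;> linarith
  · intro i hiIc
    have hil : i ≠ l := fun h => (Finset.mem_compl.1 hiIc) (h ▸ hl)
    unfold vhat
    rw [if_neg hil]
    split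
    · simp [Nat.cast_nonneg]
    · simp

lemma vhat_extreme (d : Fin (n+1) → ℕ) (I : Finset (Fin (n+1)))
    {J : Finset (Fin (n+1))} (hJ : J ⊆ Iᶜ) {l : Fin (n+1)} (hl : l ∈ I) :
    vhat d J l ∈ Set.extremePoints ℝ (Chat d I) := by
  have hvmem := vhat_mem d I hJ hl
  refine ⟨hvmem, ?_⟩
  intro x₁ hx₁ x₂ hx₂ hseg
  obtain ⟨a, b, ha, hb, hab, habv⟩ := hseg
  have hco : ∀ k, a * x₁ k + b * x₂ k = vhat d J l k := by
    intro k
    have := congrFun habv k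
    simpa using this
  have key : ∀ k, k ≠ l → x₁ k = vhat d J l k ∧ x₂ k = vhat d J l k := by
    intro k hk
    by_cases hkI : k ∈ I
    · have hkJ : k ∉ J := fun h => (Finset.mem_compl.1 (hJ h)) hkI
      have hv : vhat d J l k = (d k : ℝ) := by simp [vhat, hkJ, hk]
      rw [hv]
      exact pin_ge ha hb hab (hx₁.2.2.1 k hkI) (hx₂.2.2.1 k hkI) (hv ▸ hco k)
    · have hkIc : k ∈ Iᶜ := Finset.mem_compl.2 hkI
      by_cases hkJ : k ∈ J
      · have hv : vhat d J l k = 0 := by simp [vhat, hkJ, hk]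
        rw [hv]
        exact pin_ge ha hb hab (hx₁.1 k) (hx₂.1 k) (hv ▸ hco k)
      · have hv : vhat d J l k = (d k : ℝ) := by simp [vhat, hkJ, hk]
        rw [hv]
        exact pin_le ha hb hab (hx₁.2.2.2 k hkIc) (hx₂.2.2.2 k hkIc) (hv ▸ hco k)
  · funext k
    by_cases hk : k = l
    · subst hk
      exact eq_at_of_sum_eq (fun k hk => (key k hk).1) (by rw [hx₁.2.1, vhat_sum])
    · exact (key k hk).1
lemma extreme_form (d : Fin (n+1) → ℕ) (hd : ∀ i, 0 < d i) (I : Finset (Fin (n+1)))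
    (hI : I.Nonempty) {z : Fin (n+1) → ℝ}
    (hz : z ∈ Set.extremePoints ℝ (Chat d I)) :
    ∃ J : Finset (Fin (n+1)), J ⊆ Iᶜ ∧ ∃ l ∈ I, z = vhat d J l := by
  classical
  obtain ⟨⟨hz0, hzsum, hzI, hzIc⟩, hzext⟩ := hz
  have pert : ∀ p q : Fin (n+1), p ≠ q →
      ((p ∈ I ∧ (d p:ℝ) < z p) ∨ (p ∉ I ∧ 0 < z p ∧ z p < d p)) →
      ((q ∈ I ∧ (d q:ℝ) < z q) ∨ (q ∉ I ∧ 0 < z q ∧ z q < d q)) → False := by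
    intro p q hpq hp hq
    have hslack : ∀ r : Fin (n+1),
        ((r ∈ I ∧ (d r:ℝ) < z r) ∨ (r ∉ I ∧ 0 < z r ∧ z r < d r)) →
        ∃ δ : ℝ, 0 < δ ∧ ∀ t : ℝ, |t| ≤ δ →
          0 ≤ z r + t ∧ (r ∈ I → (d r:ℝ) ≤ z r + t) ∧ (r ∉ I → z r + t ≤ d r) := by
      intro r hr
      rcases hr with ⟨h1, h2⟩ | ⟨h1, h2, h3⟩
      · refine ⟨z r - d r, by linarith, fun t ht => ?_⟩
        have h4 := abs_le.1 ht
        have h5 : (0:ℝ) ≤ d r := Nat.cast_nonneg _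
        exact ⟨by linarith [h4.1], fun _ => by linarith [h4.1],
          fun hrI => absurd h1 (by simp [hrI])⟩
      · refine ⟨min (z r) ((d r:ℝ) - z r), lt_min h2 (by linarith), fun t ht => ?_⟩
        have h4 := abs_le.1 ht
        have h5 : min (z r) ((d r:ℝ) - z r) ≤ z r := min_le_left _ _
        have h6 : min (z r) ((d r:ℝ) - z r) ≤ (d r:ℝ) - z r := min_le_right _ _
        exact ⟨by linarith [h4.1], fun hrI => absurd hrI h1, fun _ => by linarith [h4.2]⟩
    obtain ⟨δp, hδp, hfp⟩ := hslack p hp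
    obtain ⟨δq, hδq, hfq⟩ := hslack q hq
    set ε : ℝ := min δp δq with hεdef
    have hεpos : 0 < ε := lt_min hδp hδq
    have hmem : ∀ s : ℝ, |s| ≤ ε →
        (fun k => z k + (if k = p then s else 0) - (if k = q then s else 0)) ∈ Chat d I := by
      intro s hs
      have hsp : |s| ≤ δp := le_trans hs (min_le_left _ _)
      have hsq : |(-s)| ≤ δq := by rw [abs_neg]; exact le_trans hs (min_le_right _ _)
      obtain ⟨hp0, hpI, hpIc⟩ := hfp s hsp
      obtain ⟨hq0, hqI, hqIc⟩ := hfq (-s) hsq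
      refine ⟨?_, ?_, ?_, ?_⟩
      · intro k
        by_cases hkp : k = p
        · subst hkp
          simp only [if_pos rfl, if_neg hpq, if_true, eq_self_iff_true]
          linarith
        · by_cases hkq : k = q
          · subst hkq
            simp only [if_neg hkp, if_pos rfl, if_true, eq_self_iff_true]
            linarith
          · simp only [if_neg hkp, if_neg hkq]
            have := hz0 k
            linarith
      · simp only [Finset.sum_sub_distrib, Finset.sum_add_distrib,
          Finset.sum_ite_eq', Finset.mem_univ, if_pos]
        simpa using hzsum
      · intro i hiI
        by_cases hkp : i = p
        · subst hkp
          simp only [if_pos rfl, if_neg hpq, if_true, eq_self_iff_true]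
          have := hpI hiI
          linarith
        · by_cases hkq : i = q
          · subst hkq
            simp only [if_neg hkp, if_pos rfl, if_true, eq_self_iff_true]
            have := hqI hiI
            linarith
          · simp only [if_neg hkp, if_neg hkq]
            have := hzI i hiI
            linarith
      · intro i hiIc
        have hiI : i ∉ I := Finset.mem_compl.1 hiIc
        by_cases hkp : i = p
        · subst hkp
          simp only [if_pos rfl, if_neg hpq, if_true, eq_self_iff_true]
          have := hpIc hiI
          linarith
        · by_cases hkq : i = q
          · subst hkq
            simp only [if_neg hkp, if_pos rfl, if_true, eq_self_iff_true]
            have := hqIc hiI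
            linarith
          · simp only [if_neg hkp, if_neg hkq]
            have := hzIc i hiIc
            linarith
    have habs1 : |ε| ≤ ε := by rw [abs_of_pos hεpos]
    have habs2 : |(-ε)| ≤ ε := by rw [abs_neg, abs_of_pos hεpos]
    have hseg : z ∈ openSegment ℝ
        (fun k => z k + (if k = p then ε else 0) - (if k = q then ε else 0))
        (fun k => z k + (if k = p then -ε else 0) - (if k = q then -ε else 0)) := by
      refine ⟨1/2, 1/2, by norm_num, by norm_num, by norm_num, ?_⟩
      funext k
      simp only [Pi.add_apply, Pi.smul_apply, smul_eq_mul]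
      by_cases hkp : k = p
      · subst hkp
        simp only [if_pos rfl, if_neg hpq, if_true, eq_self_iff_true]
        ring
      · by_cases hkq : k = q
        · subst hkq
          simp only [if_neg hkp, if_pos rfl, if_true, eq_self_iff_true]
          ring
        · simp only [if_neg hkp, if_neg hkq]
          ring
    have := (hzext (hmem ε habs1) (hmem (-ε) habs2) hseg)
    have hcp := congrFun this p
    simp only [if_pos rfl, if_neg hpq, if_true, eq_self_iff_true] at hcp
    linarith
  by_cases hfree : ∃ p, p ∉ I ∧ 0 < z p ∧ z p < d p
  · exfalso
    obtain ⟨p, hp1, hp2, hp3⟩ := hfree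
    have hle : ∀ k : Fin (n+1), z k ≤ (d k:ℝ) := by
      intro k
      by_cases hkI : k ∈ I
      · by_contra hgt
        push_neg at hgt
        exact pert k p (fun h => hp1 (h ▸ hkI)) (Or.inl ⟨hkI, hgt⟩) (Or.inr ⟨hp1, hp2, hp3⟩)
      · exact hzIc k (Finset.mem_compl.2 hkI)
    have hlt : ∑ k, z k < ∑ k, (d k:ℝ) :=
      Finset.sum_lt_sum (fun k _ => hle k) ⟨p, Finset.mem_univ p, hp3⟩
    linarith
  · push_neg at hfree
    have hpinIc : ∀ k, k ∉ I → z k = 0 ∨ z k = (d k:ℝ) := by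
      intro k hk
      rcases eq_or_lt_of_le (hz0 k) with h | h
      · exact Or.inl h.symm
      · exact Or.inr (le_antisymm (hzIc k (Finset.mem_compl.2 hk)) (hfree k hk h))
    obtain ⟨l, hlI, hpinI⟩ : ∃ l ∈ I, ∀ k ∈ I, k ≠ l → z k = (d k:ℝ) := by
      by_cases hfI : ∃ l ∈ I, (d l:ℝ) < z l
      · obtain ⟨l, hlI, hlfree⟩ := hfI
        refine ⟨l, hlI, fun k hkI hkl => ?_⟩
        by_contra hne
        have hklt : (d k:ℝ) < z k := lt_of_le_of_ne (hzI k hkI) (Ne.symm hne)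
        exact pert k l hkl (Or.inl ⟨hkI, hklt⟩) (Or.inl ⟨hlI, hlfree⟩)
      · push_neg at hfI
        exact ⟨hI.choose, hI.choose_spec,
          fun k hkI _ => le_antisymm (hfI k hkI) (hzI k hkI)⟩
    refine ⟨Finset.filter (fun k => z k = 0) Iᶜ, Finset.filter_subset _ _, l, hlI, ?_⟩
    set J := Finset.filter (fun k => z k = 0) Iᶜ with hJdef
    have hJsub : J ⊆ Iᶜ := Finset.filter_subset _ _
    have hkey : ∀ k, k ≠ l → z k = vhat d J l k := by
      intro k hkl
      by_cases hkI : k ∈ I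
      · have hkJ : k ∉ J := fun h => (Finset.mem_compl.1 (hJsub h)) hkI
        rw [hpinI k hkI hkl]
        simp [vhat, hkJ, hkl]
      · rcases hpinIc k hkI with h0 | hdk
        · have hkJ : k ∈ J := Finset.mem_filter.2 ⟨Finset.mem_compl.2 hkI, h0⟩
          rw [h0]; simp [vhat, hkJ, hkl]
        · have hkJ : k ∉ J := by
            intro h
            have h2 := (Finset.mem_filter.1 h).2
            rw [h2] at hdk
            have h3 : (0:ℝ) < d k := by exact_mod_cast hd k
            linarith
          rw [hdk]; simp [vhat, hkJ, hkl]
    funext k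
    by_cases hkl : k = l
    · subst hkl
      exact eq_at_of_sum_eq hkey (by rw [hzsum, vhat_sum])
    · exact hkey k hkl
def sumLM (n : ℕ) : (Fin (n+1) → ℝ) →ₗ[ℝ] ℝ where
  toFun z := ∑ i, z i
  map_add' x y := by simp [Finset.sum_add_distrib]
  map_smul' c x := by simp [Finset.mul_sum]

lemma dim_eq (d : Fin (n+1) → ℕ) (hd : ∀ i, 0 < d i) (I : Finset (Fin (n+1)))
    (hI : I.Nonempty) (hIc : Iᶜ.Nonempty) :
    Module.finrank ℝ (affineSpan ℝ (Chat d I)).direction = n := by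
  classical
  obtain ⟨l, hl⟩ := hI
  obtain ⟨j0, hj0⟩ := hIc
  have hdmem : (fun k => (d k:ℝ)) ∈ Chat d I :=
    ⟨fun i => Nat.cast_nonneg _, rfl, fun i _ => le_refl _, fun i _ => le_refl _⟩
  -- upper bound: direction ≤ ker of the sum functional
  have hupper : (affineSpan ℝ (Chat d I)).direction ≤ LinearMap.ker (sumLM n) := by
    have hspan : affineSpan ℝ (Chat d I) ≤
        AffineSubspace.mk' (fun k => (d k:ℝ)) (LinearMap.ker (sumLM n)) := by
      rw [affineSpan_le]
      intro z hz
      rw [SetLike.mem_coe, AffineSubspace.mem_mk', LinearMap.mem_ker]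
      show sumLM n (z - fun k => (d k:ℝ)) = 0
      have : sumLM n (z - fun k => (d k:ℝ)) = ∑ i, (z i - (d i:ℝ)) := rfl
      rw [this, Finset.sum_sub_distrib, hz.2.1, sub_self]
    have h2 := AffineSubspace.direction_le hspan
    rwa [AffineSubspace.direction_mk'] at h2
  -- lower bound
  have hdiff : ∀ (i j : Fin (n+1)), i ∈ I → j ∈ Iᶜ →
      (Pi.single i (1:ℝ) - Pi.single j 1) ∈ (affineSpan ℝ (Chat d I)).direction := by
    intro i j hi hj
    have hij : i ≠ j := fun h => (Finset.mem_compl.1 hj) (h ▸ hi)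
    have hmem2 : vhat d {j} i ∈ Chat d I := vhat_mem d I (by simpa using hj) hi
    have hv : vhat d {j} i - (fun k => (d k:ℝ)) = (d j : ℝ) • (Pi.single i 1 - Pi.single j 1) := by
      funext k
      simp only [Pi.sub_apply, Pi.smul_apply, smul_eq_mul, Pi.single_apply, vhat,
        Finset.sum_singleton, Finset.mem_singleton]
      by_cases hki : k = i
      · subst hki
        rw [if_neg hij, if_pos rfl, if_pos rfl, if_neg hij]
        ring
      · by_cases hkj : k = j
        · subst hkj
          rw [if_pos rfl, if_neg hki, if_neg hki, if_pos rfl]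
          ring
        · rw [if_neg hkj, if_neg hki, if_neg hki, if_neg hkj]
          ring
    have hmemdir : vhat d {j} i -ᵥ (fun k => (d k:ℝ)) ∈ (affineSpan ℝ (Chat d I)).direction :=
      AffineSubspace.vsub_mem_direction (subset_affineSpan ℝ _ hmem2)
        (subset_affineSpan ℝ _ hdmem)
    rw [vsub_eq_sub, hv] at hmemdir
    have hd0 : (d j : ℝ) ≠ 0 := by
      have : (0:ℝ) < d j := by exact_mod_cast hd j
      linarith
    have h3 := Submodule.smul_mem _ ((d j:ℝ))⁻¹ hmemdir
    rwa [inv_smul_smul₀ hd0] at h3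
  have hbase : ∀ i : Fin (n+1),
      (Pi.single i (1:ℝ) - Pi.single j0 1) ∈ (affineSpan ℝ (Chat d I)).direction := by
    intro i
    by_cases hiI : i ∈ I
    · exact hdiff i j0 hiI hj0
    · have h1 := hdiff l j0 hl hj0
      have h2 := hdiff l i hl (Finset.mem_compl.2 hiI)
      have h3 : (Pi.single i (1:ℝ) - Pi.single j0 1 : Fin (n+1) → ℝ) =
          ((Pi.single l (1:ℝ) - Pi.single j0 1) - (Pi.single l (1:ℝ) - Pi.single i 1) : Fin (n+1) → ℝ) := by
        abel
      rw [h3]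
      exact Submodule.sub_mem _ h1 h2
  have hlower : LinearMap.ker (sumLM n) ≤ (affineSpan ℝ (Chat d I)).direction := by
    intro v hv
    have hv0 : ∑ i, v i = 0 := hv
    have hrepr : v = ∑ i, v i • (Pi.single i (1:ℝ) - Pi.single j0 1 : Fin (n+1) → ℝ) := by
      funext k
      rw [Finset.sum_apply]
      have h1 : ∀ i : Fin (n+1),
          (v i • (Pi.single i (1:ℝ) - Pi.single j0 1 : Fin (n+1) → ℝ)) k
          = (if k = i then v i else 0) - v i * (if k = j0 then 1 else 0) := by
        intro i
        simp only [Pi.smul_apply, Pi.sub_apply, smul_eq_mul, Pi.single_apply]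
        split_ifs <;> ring
      rw [Finset.sum_congr rfl (fun i _ => h1 i), Finset.sum_sub_distrib]
      rw [← Finset.sum_mul, hv0, zero_mul, sub_zero]
      simp
    rw [hrepr]
    exact Submodule.sum_mem _ fun i _ => Submodule.smul_mem _ _ (hbase i)
  rw [le_antisymm hupper hlower]
  have hsurj : Function.Surjective (sumLM n) := by
    intro r
    refine ⟨Pi.single 0 r, ?_⟩
    show ∑ i, Pi.single (0 : Fin (n+1)) r i = r
    simp
  have hrn := LinearMap.finrank_range_add_finrank_ker (sumLM n)
  rw [LinearMap.range_eq_top.2 hsurj, finrank_top] at hrn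
  rw [Module.finrank_self, Module.finrank_fin_fun] at hrn
  omega
end Stmt9Aux


/-- For `I ⊆ {0,…,n}` with `I` and `I^c` nonempty, the polytope `Ĉ_I` has dimension `n`,
and its vertices (extreme points) are exactly the `v̂_{J,l}` for `J ⊆ I^c` and `l ∈ I`. -/
theorem stmt9 (n : ℕ) (d : Fin (n + 1) → ℕ) (hd : ∀ i, 0 < d i)
    (I : Finset (Fin (n + 1))) (hI : I.Nonempty) (hIc : Iᶜ.Nonempty) :
    dimAff (Chat d I) = n ∧
    Set.extremePoints ℝ (Chat d I)
      = {z | ∃ J : Finset (Fin (n + 1)), J ⊆ Iᶜ ∧ ∃ l ∈ I, z = vhat d J l} := by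
  constructor
  · exact Stmt9Aux.dim_eq d hd I hI hIc
  · ext z
    constructor
    · intro hz
      exact Stmt9Aux.extreme_form d hd I hI hz
    · rintro ⟨J, hJ, l, hl, rfl⟩
      exact Stmt9Aux.vhat_extreme d I hJ hl
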